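/- Let n = 2^r − 1 with r ≥ 3, let C ⊆ F_2^n be a perfect binary single-error-correcting code, let i be a coordinate, and let I and I' be the sets of i-even and i-odd codewords of C, respectively. Then the covering radius of I and the covering radius of I' both equal 3, and the set of vectors of F_2^n at Hamming distance exactly 3 from I is precisely I' ∪ (I' + e_i). -/

import Mathlib

/-- `C` is a perfect binary single-error-correcting code: every vector is at
Hamming distance at most 1 from exactly one codeword. -/
def IsPerfectCode (n : ℕ) (C : Set (Fin n → ZMod 2)) : Prop :=
  ∀ v : Fin n → ZMod 2, ∃! c, c ∈ C ∧ hammingDist v c ≤ 1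

/-- `x` is `i`-even: either `wt x` is odd and `x i = 1`, or `wt x` is even and
`x i = 0`. -/
def IEven (n : ℕ) (i : Fin n) (x : Fin n → ZMod 2) : Prop :=
  (Odd (hammingNorm x) ∧ x i = 1) ∨ (Even (hammingNorm x) ∧ x i = 0)

/-- The unit vector `e i`. -/
def unitVec (n : ℕ) (i : Fin n) : Fin n → ZMod 2 := Pi.single i 1

namespace Stmt13Aux

variable {n : ℕ}

abbrev V (n : ℕ) := Fin n → ZMod 2

lemma zmod2_ne_iff {a b : ZMod 2} : a ≠ b ↔ a = b + 1 := by revert a b; decide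

lemma unit_apply (i k : Fin n) : unitVec n i k = if k = i then 1 else 0 := by
  rw [unitVec, Pi.single_apply]

lemma unit_apply_self (i : Fin n) : unitVec n i i = 1 := by simp [unit_apply]

lemma unit_apply_ne {i k : Fin n} (h : k ≠ i) : unitVec n i k = 0 := by simp [unit_apply, h]

lemma add_unit_apply_self (x : V n) (j : Fin n) : (x + unitVec n j) j = x j + 1 := by
  simp [Pi.add_apply, unit_apply_self]

lemma add_unit_apply_ne (x : V n) {j k : Fin n} (h : k ≠ j) : (x + unitVec n j) k = x k := by
  simp [Pi.add_apply, unit_apply_ne h]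

lemma add_unit_cancel (x : V n) (j : Fin n) : x + unitVec n j + unitVec n j = x := by
  funext l; simp only [Pi.add_apply]
  exact (by decide : ∀ a b : ZMod 2, a + b + b = a) _ _

lemma dist_split (x y : V n) (j : Fin n) :
    hammingDist x y = (if x j ≠ y j then 1 else 0)
      + ∑ k ∈ Finset.univ.erase j, (if x k ≠ y k then 1 else 0) := by
  rw [hammingDist, Finset.card_filter, ← Finset.add_sum_erase _ _ (Finset.mem_univ j)]

lemma erase_sum_eq (x y : V n) (j : Fin n) :
    ∑ k ∈ Finset.univ.erase j, (if (x + unitVec n j) k ≠ y k then 1 else 0)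
      = ∑ k ∈ Finset.univ.erase j, (if x k ≠ y k then 1 else 0) :=
  Finset.sum_congr rfl fun k hk => by rw [add_unit_apply_ne x (Finset.ne_of_mem_erase hk)]

lemma dist_add_unit_eq {x y : V n} {j : Fin n} (h : x j = y j) :
    hammingDist (x + unitVec n j) y = hammingDist x y + 1 := by
  rw [dist_split (x + unitVec n j) y j, dist_split x y j, erase_sum_eq,
    add_unit_apply_self, h]
  rw [if_pos (by exact (by decide : ∀ a : ZMod 2, a + 1 ≠ a) (y j)), if_neg (by simp)]
  omega

lemma dist_add_unit_ne {x y : V n} {j : Fin n} (h : x j ≠ y j) :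
    hammingDist (x + unitVec n j) y + 1 = hammingDist x y := by
  rw [dist_split (x + unitVec n j) y j, dist_split x y j, erase_sum_eq,
    add_unit_apply_self, zmod2_ne_iff.mp h]
  rw [if_neg (by exact (by decide : ∀ a : ZMod 2, ¬(a + 1 + 1 ≠ a)) (y j)),
    if_pos (by exact (by decide : ∀ a : ZMod 2, a + 1 ≠ a) (y j))]
  omega

lemma d1 (x : V n) (j : Fin n) : hammingDist (x + unitVec n j) x = 1 := by
  rw [dist_add_unit_eq rfl, hammingDist_self]

lemma d2 (x : V n) {j k : Fin n} (h : k ≠ j) :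
    hammingDist (x + unitVec n j + unitVec n k) x = 2 := by
  rw [dist_add_unit_eq (add_unit_apply_ne x h), d1]

lemma d3 (x : V n) {j k m : Fin n} (hkj : k ≠ j) (hmj : m ≠ j) (hmk : m ≠ k) :
    hammingDist (x + unitVec n j + unitVec n k + unitVec n m) x = 3 := by
  have : (x + unitVec n j + unitVec n k) m = x m := by
    rw [add_unit_apply_ne _ hmk, add_unit_apply_ne _ hmj]
  rw [dist_add_unit_eq this, d2 x hkj]

lemma eq_or_unit_of_dist_le_one {w c : V n} (h : hammingDist w c ≤ 1) :
    c = w ∨ ∃ m, c = w + unitVec n m := by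
  rcases Nat.le_one_iff_eq_zero_or_eq_one.mp h with h0 | h1
  · exact Or.inl (eq_of_hammingDist_eq_zero h0).symm
  · right
    rw [hammingDist] at h1
    obtain ⟨m, hm⟩ := Finset.card_eq_one.mp h1
    refine ⟨m, funext fun k => ?_⟩
    by_cases hk : k = m
    · subst hk
      have hmem : k ∈ Finset.univ.filter (fun l => w l ≠ c l) := by rw [hm]; simp
      have hne : w k ≠ c k := (Finset.mem_filter.mp hmem).2
      rw [add_unit_apply_self]
      exact zmod2_ne_iff.mp (Ne.symm hne)
    · have hnmem : k ∉ Finset.univ.filter (fun l => w l ≠ c l) := by rw [hm]; simp [hk]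
      have : ¬ (w k ≠ c k) := fun hh => hnmem (Finset.mem_filter.mpr ⟨Finset.mem_univ k, hh⟩)
      rw [add_unit_apply_ne _ hk]
      exact (not_not.mp this).symm

/-- The parity invariant: sum of all coordinates plus the `i`-th coordinate. -/
def sgm (i : Fin n) (x : V n) : ZMod 2 := (∑ j, x j) + x i

lemma cast_hammingNorm (x : V n) : ((hammingNorm x : ℕ) : ZMod 2) = ∑ j, x j := by
  rw [hammingNorm, Finset.card_filter, Nat.cast_sum]
  refine Finset.sum_congr rfl fun j _ => ?_
  rw [apply_ite (Nat.cast : ℕ → ZMod 2), Nat.cast_one, Nat.cast_zero]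
  exact (by decide : ∀ a : ZMod 2, (if a ≠ 0 then (1:ZMod 2) else 0) = a) (x j)

lemma cast_eq_zero_iff (d : ℕ) : (d : ZMod 2) = 0 ↔ Even d := by
  rw [ZMod.natCast_eq_zero_iff]
  exact ⟨fun h => even_iff_two_dvd.mpr h, fun h => even_iff_two_dvd.mp h⟩

lemma castOdd {d : ℕ} (h : Odd d) : (d : ZMod 2) = 1 := by
  obtain ⟨k, rfl⟩ := h
  push_cast
  have h2 : (2 : ZMod 2) = 0 := by decide
  rw [h2]; ring

lemma iEven_iff (i : Fin n) (x : V n) : IEven n i x ↔ sgm i x = 0 := by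
  unfold IEven sgm
  rw [← cast_hammingNorm]
  rcases Nat.even_or_odd (hammingNorm x) with h | h
  · rw [(cast_eq_zero_iff _).mpr h]
    have hno : ¬ Odd (hammingNorm x) := Nat.not_odd_iff_even.mpr h
    constructor
    · rintro (⟨ho, _⟩ | ⟨_, h0'⟩)
      · exact absurd ho hno
      · rw [h0']; decide
    · intro hz; exact Or.inr ⟨h, by simpa using hz⟩
  · rw [castOdd h]
    have hne : ¬ Even (hammingNorm x) := Nat.not_even_iff_odd.mpr h
    constructor
    · rintro (⟨_, h1'⟩ | ⟨he, _⟩)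
      · rw [h1']; decide
      · exact absurd he hne
    · intro hz
      exact Or.inl ⟨h, (by decide : ∀ a : ZMod 2, 1 + a = 0 → a = 1) _ hz⟩

lemma notIEven_iff (i : Fin n) (x : V n) : ¬ IEven n i x ↔ sgm i x = 1 := by
  rw [iEven_iff]
  exact ⟨fun h => (by decide : ∀ a : ZMod 2, a ≠ 0 → a = 1) _ h,
    fun h => by rw [h]; decide⟩

lemma sgm_add (i : Fin n) (x y : V n) : sgm i (x + y) = sgm i x + sgm i y := by
  unfold sgm
  simp only [Pi.add_apply, Finset.sum_add_distrib]
  ring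

lemma sum_unit (j : Fin n) : ∑ k, unitVec n j k = 1 := by
  unfold unitVec; rw [Finset.sum_pi_single']; simp

lemma sgm_unit_ne {i j : Fin n} (h : j ≠ i) : sgm i (unitVec n j) = 1 := by
  unfold sgm
  rw [sum_unit, unit_apply_ne (Ne.symm h), add_zero]

lemma sgm_unit_self (i : Fin n) : sgm i (unitVec n i) = 0 := by
  unfold sgm
  rw [sum_unit, unit_apply_self]; decide

lemma cast_dist (i : Fin n) (x y : V n) :
    ((hammingDist x y : ℕ) : ZMod 2) = sgm i x + sgm i y + x i + y i := by
  rw [hammingDist_eq_hammingNorm, cast_hammingNorm]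
  unfold sgm
  have hsub : ∀ j, (-x + y) j = x j + y j := fun j => by
    simp only [Pi.add_apply, Pi.neg_apply]
    exact (by decide : ∀ a b : ZMod 2, -a + b = a + b) _ _
  rw [Finset.sum_congr rfl (fun j _ => hsub j), Finset.sum_add_distrib]
  have h2 : (2 : ZMod 2) = 0 := by decide
  linear_combination (-(x i) - y i) * h2

lemma min_dist {C : Set (V n)} (hC : IsPerfectCode n C) {c c' : V n}
    (hc : c ∈ C) (hc' : c' ∈ C) (hne : c ≠ c') : 3 ≤ hammingDist c c' := by
  by_contra hlt
  push_neg at hlt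
  by_cases hd : hammingDist c c' ≤ 1
  · obtain ⟨u, _, huniq⟩ := hC c
    have h1 := huniq c ⟨hc, by rw [hammingDist_self]; omega⟩
    have h2 := huniq c' ⟨hc', hd⟩
    exact hne (h1.trans h2.symm)
  · have hd2 : hammingDist c c' = 2 := by omega
    have hex : ∃ j, c j ≠ c' j := by
      by_contra hall; push_neg at hall
      exact hne (funext hall)
    obtain ⟨j, hj⟩ := hex
    obtain ⟨u, _, huniq⟩ := hC (c + unitVec n j)
    have dvc : hammingDist (c + unitVec n j) c = 1 := d1 c j
    have dvc' : hammingDist (c + unitVec n j) c' = 1 := by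
      have := dist_add_unit_ne hj; omega
    have h1 := huniq c ⟨hc, le_of_eq dvc⟩
    have h2 := huniq c' ⟨hc', le_of_eq dvc'⟩
    exact hne (h1.trans h2.symm)

lemma triple {C : Set (V n)} (hC : IsPerfectCode n C) {c : V n} (hc : c ∈ C)
    {j k : Fin n} (hjk : j ≠ k) :
    ∃ m, m ≠ j ∧ m ≠ k ∧ c + unitVec n j + unitVec n k + unitVec n m ∈ C := by
  have hwc : hammingDist (c + unitVec n j + unitVec n k) c = 2 := d2 c (Ne.symm hjk)
  obtain ⟨c1, ⟨hc1C, hc1d⟩, _⟩ := hC (c + unitVec n j + unitVec n k)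
  have hne : c1 ≠ c := fun h => by rw [h] at hc1d; omega
  have h3 : 3 ≤ hammingDist c c1 := min_dist hC hc hc1C (Ne.symm hne)
  rcases eq_or_unit_of_dist_le_one hc1d with rfl | ⟨m, rfl⟩
  · rw [hammingDist_comm] at h3; omega
  · refine ⟨m, ?_, ?_, hc1C⟩
    · rintro rfl
      have heq : c + unitVec n m + unitVec n k + unitVec n m = c + unitVec n k := by
        funext l; simp only [Pi.add_apply]
        exact (by decide : ∀ a b cc : ZMod 2, a + b + cc + b = a + cc) _ _ _
      rw [heq] at h3
      have : hammingDist c (c + unitVec n k) = 1 := by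
        rw [hammingDist_comm]; exact d1 c k
      omega
    · rintro rfl
      rw [add_unit_cancel] at h3
      have : hammingDist c (c + unitVec n j) = 1 := by
        rw [hammingDist_comm]; exact d1 c j
      omega

lemma exists_not_mem (s : Finset (Fin n)) (h : s.card < n) : ∃ k, k ∉ s := by
  by_contra h'; push_neg at h'
  rw [Finset.eq_univ_iff_forall.mpr h', Finset.card_univ, Fintype.card_fin] at h; omega

lemma card3_le {a b c : Fin n} : ({a, b, c} : Finset (Fin n)).card ≤ 3 :=
  (Finset.card_insert_le _ _).trans (Nat.succ_le_succ
    ((Finset.card_insert_le _ _).trans (by simp)))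

lemma tripleC {C : Set (V n)} (hn7 : 7 ≤ n) (hC : IsPerfectCode n C) {c : V n}
    (hc : c ∈ C) {i j : Fin n} (hji : j ≠ i) :
    ∃ k m, k ≠ i ∧ m ≠ i ∧ j ≠ k ∧ j ≠ m ∧ k ≠ m ∧
      c + unitVec n j + unitVec n k + unitVec n m ∈ C := by
  obtain ⟨k1, hk1⟩ := exists_not_mem {i, j} (by
    calc ({i, j} : Finset (Fin n)).card ≤ 2 := (Finset.card_insert_le _ _).trans (by simp)
    _ < n := by omega)
  simp only [Finset.mem_insert, Finset.mem_singleton, not_or] at hk1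
  obtain ⟨hk1i, hk1j⟩ := hk1
  obtain ⟨m1, hm1j, hm1k1, hm1C⟩ := triple hC hc (Ne.symm hk1j)
  by_cases hm1i : m1 = i
  · obtain ⟨k2, hk2⟩ := exists_not_mem {i, j, k1} (lt_of_le_of_lt card3_le (by omega))
    simp only [Finset.mem_insert, Finset.mem_singleton, not_or] at hk2
    obtain ⟨hk2i, hk2j, hk2k1⟩ := hk2
    obtain ⟨m2, hm2j, hm2k2, hm2C⟩ := triple hC hc (Ne.symm hk2j)
    by_cases hm2i : m2 = i
    · exfalso
      rw [hm1i] at hm1C; rw [hm2i] at hm2C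
      set x := c + unitVec n j + unitVec n i with hx
      have e1 : c + unitVec n j + unitVec n k1 + unitVec n i = x + unitVec n k1 := by
        rw [hx]; funext l; simp only [Pi.add_apply]
        exact (by decide : ∀ a b cc d : ZMod 2, a + b + cc + d = a + b + d + cc) _ _ _ _
      have e2 : c + unitVec n j + unitVec n k2 + unitVec n i = x + unitVec n k2 := by
        rw [hx]; funext l; simp only [Pi.add_apply]
        exact (by decide : ∀ a b cc d : ZMod 2, a + b + cc + d = a + b + d + cc) _ _ _ _
      rw [e1] at hm1C; rw [e2] at hm2C
      have hne : x + unitVec n k1 ≠ x + unitVec n k2 := by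
        intro h
        have := congrFun (add_left_cancel h) k1
        rw [unit_apply_self, unit_apply_ne (Ne.symm hk2k1)] at this
        exact (by decide : (1 : ZMod 2) ≠ 0) this
      have htri : hammingDist (x + unitVec n k1) (x + unitVec n k2) ≤ 2 := by
        calc hammingDist (x + unitVec n k1) (x + unitVec n k2)
            ≤ hammingDist (x + unitVec n k1) x + hammingDist x (x + unitVec n k2) :=
              hammingDist_triangle _ _ _
        _ ≤ 2 := by rw [d1, hammingDist_comm, d1]
      have := min_dist hC hm1C hm2C hne
      omega
    · exact ⟨k2, m2, hk2i, hm2i, Ne.symm hk2j, Ne.symm hm2j, Ne.symm hm2k2, hm2C⟩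
  · exact ⟨k1, m1, hk1i, hm1i, Ne.symm hk1j, Ne.symm hm1j, Ne.symm hm1k1, hm1C⟩

lemma quad {C : Set (V n)} (hn7 : 7 ≤ n) (hC : IsPerfectCode n C) {c : V n}
    (hc : c ∈ C) (i : Fin n) :
    ∃ j k m, j ≠ i ∧ k ≠ i ∧ m ≠ i ∧ j ≠ k ∧ j ≠ m ∧ k ≠ m ∧
      c + unitVec n i + unitVec n j + unitVec n k + unitVec n m ∈ C := by
  obtain ⟨j, hj⟩ := exists_not_mem {i} (by rw [Finset.card_singleton]; omega)
  rw [Finset.mem_singleton] at hj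
  obtain ⟨m1, hm1i, hm1j, hm1C⟩ := triple hC hc (Ne.symm hj)
  obtain ⟨k, hk⟩ := exists_not_mem {i, j, m1} (lt_of_le_of_lt card3_le (by omega))
  simp only [Finset.mem_insert, Finset.mem_singleton, not_or] at hk
  obtain ⟨hki, hkj, hkm1⟩ := hk
  have hwc : hammingDist (c + unitVec n i + unitVec n j + unitVec n k) c = 3 :=
    d3 c hj hki hkj
  obtain ⟨c1, ⟨hc1C, hc1d⟩, _⟩ := hC (c + unitVec n i + unitVec n j + unitVec n k)
  have hnec : c1 ≠ c := fun h => by rw [h] at hc1d; omega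
  have h3 : 3 ≤ hammingDist c c1 := min_dist hC hc hc1C (Ne.symm hnec)
  rcases eq_or_unit_of_dist_le_one hc1d with rfl | ⟨m, rfl⟩
  · exfalso
    set x := c + unitVec n i + unitVec n j with hx
    have hne : x + unitVec n k ≠ x + unitVec n m1 := by
      intro h
      have := congrFun (add_left_cancel h) k
      rw [unit_apply_self, unit_apply_ne hkm1] at this
      exact (by decide : (1 : ZMod 2) ≠ 0) this
    have htri : hammingDist (x + unitVec n k) (x + unitVec n m1) ≤ 2 := by
      calc hammingDist (x + unitVec n k) (x + unitVec n m1)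
          ≤ hammingDist (x + unitVec n k) x + hammingDist x (x + unitVec n m1) :=
            hammingDist_triangle _ _ _
      _ ≤ 2 := by rw [d1, hammingDist_comm, d1]
    have := min_dist hC hc1C hm1C hne
    omega
  · refine ⟨j, k, m, hj, hki, ?_, fun h => hkj (h.symm), ?_, ?_, hc1C⟩
    · intro hmi
      rw [hmi] at h3
      have heq : c + unitVec n i + unitVec n j + unitVec n k + unitVec n i
          = c + unitVec n j + unitVec n k := by
        funext l; simp only [Pi.add_apply]
        exact (by decide : ∀ a b cc d : ZMod 2, a + b + cc + d + b = a + cc + d) _ _ _ _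
      rw [heq] at h3
      have : hammingDist c (c + unitVec n j + unitVec n k) = 2 := by
        rw [hammingDist_comm]; exact d2 c hkj
      omega
    · intro hjm
      rw [← hjm] at h3
      have heq : c + unitVec n i + unitVec n j + unitVec n k + unitVec n j
          = c + unitVec n i + unitVec n k := by
        funext l; simp only [Pi.add_apply]
        exact (by decide : ∀ a b cc d : ZMod 2, a + b + cc + d + cc = a + b + d) _ _ _ _
      rw [heq] at h3
      have : hammingDist c (c + unitVec n i + unitVec n k) = 2 := by
        rw [hammingDist_comm]; exact d2 c hki
      omega
    · intro hkm
      rw [← hkm] at h3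
      rw [add_unit_cancel] at h3
      have : hammingDist c (c + unitVec n i + unitVec n j) = 2 := by
        rw [hammingDist_comm]; exact d2 c hj
      omega

lemma sgm_triple {i j k m : Fin n} (x : V n) (hj : j ≠ i) (hk : k ≠ i) (hm : m ≠ i) :
    sgm i (x + unitVec n j + unitVec n k + unitVec n m) = sgm i x + 1 := by
  rw [sgm_add, sgm_add, sgm_add, sgm_unit_ne hj, sgm_unit_ne hk, sgm_unit_ne hm]
  exact (by decide : ∀ a : ZMod 2, a + 1 + 1 + 1 = a + 1) _

lemma sgm_quad {i j k m : Fin n} (x : V n) (hj : j ≠ i) (hk : k ≠ i) (hm : m ≠ i) :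
    sgm i (x + unitVec n i + unitVec n j + unitVec n k + unitVec n m) = sgm i x + 1 := by
  rw [sgm_add, sgm_add, sgm_add, sgm_add, sgm_unit_self,
    sgm_unit_ne hj, sgm_unit_ne hk, sgm_unit_ne hm]
  exact (by decide : ∀ a : ZMod 2, a + 0 + 1 + 1 + 1 = a + 1) _

/-- From any codeword there is a codeword of opposite parity at distance exactly 3. -/
lemma opp_exact3_self {C : Set (V n)} (hn7 : 7 ≤ n) (hC : IsPerfectCode n C)
    {c : V n} (hc : c ∈ C) (i : Fin n) :
    ∃ c' ∈ C, sgm i c' = sgm i c + 1 ∧ hammingDist c c' = 3 := by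
  obtain ⟨j, hj⟩ := exists_not_mem {i} (by rw [Finset.card_singleton]; omega)
  rw [Finset.mem_singleton] at hj
  obtain ⟨k, m, hki, hmi, hjk, hjm, hkm, hmem⟩ := tripleC hn7 hC hc hj
  refine ⟨_, hmem, sgm_triple c hj hki hmi, ?_⟩
  rw [hammingDist_comm]
  exact d3 c (Ne.symm hjk) (Ne.symm hjm) (Ne.symm hkm)

/-- From any codeword `c` there is a codeword of opposite parity at distance
exactly 3 from `c + e i`. -/
lemma opp_exact3_ei {C : Set (V n)} (hn7 : 7 ≤ n) (hC : IsPerfectCode n C)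
    {c : V n} (hc : c ∈ C) (i : Fin n) :
    ∃ c' ∈ C, sgm i c' = sgm i c + 1 ∧ hammingDist (c + unitVec n i) c' = 3 := by
  obtain ⟨j, k, m, hji, hki, hmi, hjk, hjm, hkm, hmem⟩ := quad hn7 hC hc i
  refine ⟨_, hmem, sgm_quad c hji hki hmi, ?_⟩
  rw [hammingDist_comm]
  exact d3 (c + unitVec n i) (Ne.symm hjk) (Ne.symm hjm) (Ne.symm hkm)

/-- Near any vector within distance 1 of a codeword `c0`, there is a codeword of
parity opposite to `c0` within distance 3. -/
lemma opp_within {C : Set (V n)} (hn7 : 7 ≤ n) (hC : IsPerfectCode n C)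
    {c0 v : V n} (hc0 : c0 ∈ C) (hv : hammingDist v c0 ≤ 1) (i : Fin n) :
    ∃ c' ∈ C, sgm i c' = sgm i c0 + 1 ∧ hammingDist v c' ≤ 3 := by
  rcases eq_or_unit_of_dist_le_one hv with rfl | ⟨m, hm⟩
  · obtain ⟨c', hc', hσ, hd⟩ := opp_exact3_self hn7 hC hc0 i
    exact ⟨c', hc', hσ, le_of_eq hd⟩
  · rw [hm] at hc0
    by_cases hmi : m = i
    · subst hmi
      obtain ⟨j, k, l, hji, hki, hli, hjk, hjl, hkl, hmem⟩ := quad hn7 hC hc0 m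
      rw [add_unit_cancel] at hmem
      refine ⟨_, hmem, ?_, ?_⟩
      · rw [sgm_add, sgm_add, sgm_add, sgm_unit_ne hji, sgm_unit_ne hki, sgm_unit_ne hli,
          hm, sgm_add, sgm_unit_self]
        exact (by decide : ∀ a : ZMod 2, a + 1 + 1 + 1 = a + 0 + 1) _
      · rw [hammingDist_comm, d3 v (Ne.symm hjk) (Ne.symm hjl) (Ne.symm hkl)]
    · obtain ⟨k, l, hki, hli, hmk, hml, hkl, hmem⟩ := tripleC hn7 hC hc0 hmi
      rw [add_unit_cancel] at hmem
      refine ⟨_, hmem, ?_, ?_⟩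
      · rw [sgm_add, sgm_add, sgm_unit_ne hki, sgm_unit_ne hli,
          hm, sgm_add, sgm_unit_ne hmi]
      · rw [hammingDist_comm, d2 v (Ne.symm hkl)]
        omega

lemma ne_of_sgm_ne {i : Fin n} {x y : V n} (h : sgm i x ≠ sgm i y) : x ≠ y :=
  fun he => h (he ▸ rfl)

lemma ge3_of_opp {C : Set (V n)} (hC : IsPerfectCode n C) {u c : V n}
    (hu : u ∈ C) (hc : c ∈ C) {i : Fin n} (hσ : sgm i u ≠ sgm i c) :
    3 ≤ hammingDist u c :=
  min_dist hC hu hc (ne_of_sgm_ne hσ)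

lemma ge3_ei {C : Set (V n)} (hC : IsPerfectCode n C) {u c : V n}
    (hu : u ∈ C) (hc : c ∈ C) {i : Fin n} (hσ : sgm i u ≠ sgm i c) :
    3 ≤ hammingDist (u + unitVec n i) c := by
  have h3 : 3 ≤ hammingDist u c := ge3_of_opp hC hu hc hσ
  by_cases h : u i = c i
  · rw [dist_add_unit_eq h]; omega
  · have heq := dist_add_unit_ne h
    have hcast : ((hammingDist u c : ℕ) : ZMod 2) = 0 := by
      rw [cast_dist i, zmod2_ne_iff.mp hσ, zmod2_ne_iff.mp h]
      exact (by decide : ∀ a b : ZMod 2, a + 1 + a + (b + 1) + b = 0) _ _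
    have hdvd : 2 ∣ hammingDist u c := (ZMod.natCast_eq_zero_iff _ 2).mp hcast
    omega

end Stmt13Aux

open Stmt13Aux in
theorem stmt_13 (r n : ℕ) (hr : 3 ≤ r) (hn : n = 2 ^ r - 1)
    (C : Set (Fin n → ZMod 2)) (hC : IsPerfectCode n C) (i : Fin n)
    (I I' : Set (Fin n → ZMod 2))
    (hI : I = {x ∈ C | IEven n i x}) (hI' : I' = {x ∈ C | ¬ IEven n i x}) :
    ((∀ v, ∃ c ∈ I, hammingDist v c ≤ 3) ∧ (∃ v, ∀ c ∈ I, 3 ≤ hammingDist v c)) ∧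
    ((∀ v, ∃ c ∈ I', hammingDist v c ≤ 3) ∧ (∃ v, ∀ c ∈ I', 3 ≤ hammingDist v c)) ∧
    {v | (∃ c ∈ I, hammingDist v c = 3) ∧ ∀ c ∈ I, 3 ≤ hammingDist v c} =
      I' ∪ (fun x => x + unitVec n i) '' I' := by
  subst hI hI'
  have hn7 : 7 ≤ n := by
    have : 2 ^ 3 ≤ 2 ^ r := Nat.pow_le_pow_right (by norm_num) hr
    omega
  -- membership lemmas
  have memI : ∀ x, x ∈ {x ∈ C | IEven n i x} ↔ x ∈ C ∧ sgm i x = 0 := by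
    intro x; rw [Set.mem_setOf_eq, iEven_iff]
  have memI' : ∀ x, x ∈ {x ∈ C | ¬ IEven n i x} ↔ x ∈ C ∧ sgm i x = 1 := by
    intro x; rw [Set.mem_setOf_eq, notIEven_iff]
  -- a codeword of each parity exists
  obtain ⟨c0, ⟨hc0C, _⟩, _⟩ := hC 0
  have hex : ∀ ε : ZMod 2, ∃ c ∈ C, sgm i c = ε := by
    intro ε
    obtain ⟨c1, hc1C, hσ1, _⟩ := opp_exact3_self hn7 hC hc0C i
    by_cases h : sgm i c0 = ε
    · exact ⟨c0, hc0C, h⟩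
    · exact ⟨c1, hc1C, by
        rw [hσ1]
        exact (by decide : ∀ a b : ZMod 2, a ≠ b → a + 1 = b) _ _ h⟩
  -- generic covering bound
  have cover : ∀ (ε : ZMod 2) (v : Fin n → ZMod 2),
      ∃ c ∈ C, sgm i c = ε ∧ hammingDist v c ≤ 3 := by
    intro ε v
    obtain ⟨cv, ⟨hcvC, hcvd⟩, _⟩ := hC v
    by_cases h : sgm i cv = ε
    · exact ⟨cv, hcvC, h, hcvd.trans (by omega)⟩
    · obtain ⟨c', hc'C, hσ', hd'⟩ := opp_within hn7 hC hcvC hcvd i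
      refine ⟨c', hc'C, ?_, hd'⟩
      rw [hσ']
      exact (by decide : ∀ a b : ZMod 2, a ≠ b → a + 1 = b) _ _ h
  refine ⟨⟨?_, ?_⟩, ⟨?_, ?_⟩, ?_⟩
  · -- covering radius of I ≤ 3
    intro v
    obtain ⟨c, hcC, hσ, hd⟩ := cover 0 v
    exact ⟨c, (memI c).mpr ⟨hcC, hσ⟩, hd⟩
  · -- some vector at distance ≥ 3 from I
    obtain ⟨u, huC, hσu⟩ := hex 1
    refine ⟨u, fun c hc => ?_⟩
    obtain ⟨hcC, hσc⟩ := (memI c).mp hc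
    exact ge3_of_opp hC huC hcC (by rw [hσu, hσc]; decide)
  · -- covering radius of I' ≤ 3
    intro v
    obtain ⟨c, hcC, hσ, hd⟩ := cover 1 v
    exact ⟨c, (memI' c).mpr ⟨hcC, hσ⟩, hd⟩
  · -- some vector at distance ≥ 3 from I'
    obtain ⟨u, huC, hσu⟩ := hex 0
    refine ⟨u, fun c hc => ?_⟩
    obtain ⟨hcC, hσc⟩ := (memI' c).mp hc
    exact ge3_of_opp hC huC hcC (by rw [hσu, hσc]; decide)
  · -- the set of vectors at distance exactly 3 from I
    ext v
    simp only [Set.mem_setOf_eq, Set.mem_union, Set.mem_image]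
    constructor
    · rintro ⟨-, hall⟩
      obtain ⟨cv, ⟨hcvC, hcvd⟩, _⟩ := hC v
      have hσcv : sgm i cv = 1 := by
        by_cases h : sgm i cv = 0
        · exfalso
          have := hall cv ((memI cv).mpr ⟨hcvC, h⟩)
          omega
        · exact (by decide : ∀ a : ZMod 2, a ≠ 0 → a = 1) _ h
      rcases eq_or_unit_of_dist_le_one hcvd with rfl | ⟨m, hm⟩
      · exact Or.inl ((memI' _).mpr ⟨hcvC, hσcv⟩)
      · by_cases hmi : m = i
        · subst hmi
          refine Or.inr ⟨cv, (memI' cv).mpr ⟨hcvC, hσcv⟩, ?_⟩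
          rw [hm, add_unit_cancel]
        · exfalso
          rw [hm] at hcvC
          obtain ⟨k, l, hki, hli, hmk, hml, hkl, hmem⟩ := tripleC hn7 hC hcvC hmi
          rw [add_unit_cancel] at hmem
          have hσ' : sgm i (v + unitVec n k + unitVec n l) = 0 := by
            rw [sgm_add, sgm_add, sgm_unit_ne hki, sgm_unit_ne hli]
            have : sgm i v = 0 := by
              have := hσcv
              rw [hm, sgm_add, sgm_unit_ne hmi] at this
              exact (by decide : ∀ a : ZMod 2, a + 1 = 1 → a = 0) _ this
            rw [this]; decide
          have h3 := hall _ ((memI _).mpr ⟨hmem, hσ'⟩)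
          have h2 : hammingDist v (v + unitVec n k + unitVec n l) = 2 := by
            rw [hammingDist_comm]; exact d2 v (Ne.symm hkl)
          omega
    · rintro (hv | ⟨u, hu, hueq⟩)
      · obtain ⟨hvC, hσv⟩ := (memI' v).mp hv
        constructor
        · obtain ⟨c', hc'C, hσ', hd'⟩ := opp_exact3_self hn7 hC hvC i
          exact ⟨c', (memI c').mpr ⟨hc'C, by rw [hσ', hσv]; decide⟩, hd'⟩
        · intro c hc
          obtain ⟨hcC, hσc⟩ := (memI c).mp hc
          exact ge3_of_opp hC hvC hcC (by rw [hσv, hσc]; decide)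
      · obtain ⟨huC, hσu⟩ := (memI' u).mp hu
        subst hueq
        constructor
        · obtain ⟨c', hc'C, hσ', hd'⟩ := opp_exact3_ei hn7 hC huC i
          exact ⟨c', (memI c').mpr ⟨hc'C, by rw [hσ', hσu]; decide⟩, hd'⟩
        · intro c hc
          obtain ⟨hcC, hσc⟩ := (memI c).mp hc
          exact ge3_ei hC huC hcC (by rw [hσu, hσc]; decide)
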